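/- Cayley(S × T) embeds into Cayley(S) × Cayley(T): the map sending ∏φ_{(s_i,t_i)} to (∏φ_{s_i}, ∏φ_{t_i}) is a well-defined injective semigroup homomorphism. -/

import Mathlib

/-- φ_s([a_1,...,a_n]) = [s a_1, s a_1 a_2, ..., s a_1 ⋯ a_n] -/
def phi {S : Type*} [Mul S] (s : S) (l : List S) : List S :=
  (l.scanl (· * ·) s).tail

/-- Cayley(S): the subsemigroup of functions on words over S¹ = WithOne S
(under composition) generated by the maps φ_s, s ∈ S. -/
def Cayley (S : Type*) [Semigroup S] : Subsemigroup (Function.End (List (WithOne S))) :=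
  Subsemigroup.closure {f | ∃ s : S, f = phi (s : WithOne S)}

section Aux

variable {U V : Type*} [Semigroup U] [Semigroup V]

private lemma scanl_map (m : WithOne U →* WithOne V) (a : WithOne U) (l : List (WithOne U)) :
    (l.scanl (· * ·) a).map m = (l.map m).scanl (· * ·) (m a) := by
  induction l generalizing a with
  | nil => simp [List.scanl_nil]
  | cons x xs ih => simp [List.scanl_cons, ih, map_mul]

private lemma phi_map (m : WithOne U →* WithOne V) (a : WithOne U) (l : List (WithOne U)) :
    (phi a l).map m = phi (m a) (l.map m) := by
  simp only [phi]
  rw [List.map_tail, scanl_map]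

variable (π : U →ₙ* V) (σ : WithOne V → WithOne U)
  (hσ : ∀ x, WithOne.mapMulHom π (σ x) = x)

/-- The candidate shadow of `f` along `π`. -/
private def shadow (f : List (WithOne U) → List (WithOne U)) :
    List (WithOne V) → List (WithOne V) :=
  fun l => ((f (l.map σ)).map (WithOne.mapMulHom π))

private lemma shadow_exists {f : Function.End (List (WithOne U))}
    (hf : f ∈ Cayley U) :
    ∃ g ∈ Cayley V, ∀ l, (f l).map (WithOne.mapMulHom π) = g (l.map (WithOne.mapMulHom π)) := by
  refine Subsemigroup.closure_induction ?_ ?_ hf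
  · rintro f ⟨u, rfl⟩
    refine ⟨phi ((π u : V) : WithOne V), Subsemigroup.subset_closure ⟨π u, rfl⟩, fun l => ?_⟩
    have := phi_map (WithOne.mapMulHom π) (u : WithOne U) l
    simpa [WithOne.mapMulHom_coe] using this
  · rintro f g - - ⟨F, hF, hFc⟩ ⟨G, hG, hGc⟩
    refine ⟨F * G, mul_mem hF hG, fun l => ?_⟩
    show ((f (g l)).map _) = F (G (l.map _))
    rw [hFc, hGc]

include hσ in
private lemma map_map_sect (l : List (WithOne V)) :
    ((l.map σ).map (WithOne.mapMulHom π)) = l := by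
  rw [List.map_map]
  simpa [Function.comp_def] using List.map_congr_left (fun x _ => hσ x) |>.trans (List.map_id l)

include hσ in
private lemma shadow_spec {f : Function.End (List (WithOne U))}
    (hf : f ∈ Cayley U) :
    shadow π σ f ∈ Cayley V ∧
      ∀ l, (f l).map (WithOne.mapMulHom π) = shadow π σ f (l.map (WithOne.mapMulHom π)) := by
  obtain ⟨g, hg, hc⟩ := shadow_exists π hf
  have heq : shadow π σ f = g := by
    funext l
    show ((f (l.map σ)).map (WithOne.mapMulHom π)) = g l
    rw [hc, map_map_sect π σ hσ]
  rw [heq]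
  exact ⟨hg, hc⟩

include hσ in
private lemma shadow_mul {f g : Function.End (List (WithOne U))}
    (hf : f ∈ Cayley U) (hg : g ∈ Cayley U) :
    shadow π σ (f * g) = (shadow π σ f) ∘ (shadow π σ g) := by
  funext l
  show ((f (g (l.map σ))).map (WithOne.mapMulHom π)) = _
  rw [(shadow_spec π σ hσ hf).2, (shadow_spec π σ hσ hg).2, map_map_sect π σ hσ]
  rfl

include hσ in
private lemma shadow_gen (u : U) :
    shadow π σ (phi ((u : U) : WithOne U)) = phi ((π u : V) : WithOne V) := by
  funext l
  show ((phi ((u : U) : WithOne U) (l.map σ)).map (WithOne.mapMulHom π)) = _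
  rw [phi_map, map_map_sect π σ hσ, WithOne.mapMulHom_coe]

/-- The component homomorphism `Cayley U →ₙ* Cayley V`. -/
private def cayleyMap : Cayley U →ₙ* Cayley V where
  toFun f := ⟨shadow π σ f.1, (shadow_spec π σ hσ f.2).1⟩
  map_mul' f g := by
    ext1
    exact shadow_mul π σ hσ f.2 g.2

private lemma cayleyMap_apply {f : Function.End (List (WithOne U))} (hf : f ∈ Cayley U)
    (l : List (WithOne U)) :
    (f l).map (WithOne.mapMulHom π) = (cayleyMap π σ hσ ⟨f, hf⟩).1 (l.map (WithOne.mapMulHom π)) :=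
  (shadow_spec π σ hσ hf).2 l

end Aux

section Pair

variable {S T : Type*} [Semigroup S] [Semigroup T]

private lemma pair_inj {x y : WithOne (S × T)}
    (h1 : WithOne.mapMulHom (MulHom.fst S T) x = WithOne.mapMulHom (MulHom.fst S T) y)
    (h2 : WithOne.mapMulHom (MulHom.snd S T) x = WithOne.mapMulHom (MulHom.snd S T) y) : x = y := by
  induction x using WithOne.recOneCoe with
  | one =>
    induction y using WithOne.recOneCoe with
    | one => rfl
    | coe b => simp [WithOne.mapMulHom_coe] at h1
  | coe a =>
    induction y using WithOne.recOneCoe with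
    | one => simp [WithOne.mapMulHom_coe] at h1
    | coe b =>
      rw [WithOne.mapMulHom_coe, WithOne.mapMulHom_coe, WithOne.coe_inj] at h1 h2
      exact congrArg _ (Prod.ext h1 h2)

private lemma pair_list_inj {l₁ l₂ : List (WithOne (S × T))}
    (h1 : l₁.map (WithOne.mapMulHom (MulHom.fst S T)) = l₂.map (WithOne.mapMulHom (MulHom.fst S T)))
    (h2 : l₁.map (WithOne.mapMulHom (MulHom.snd S T)) = l₂.map (WithOne.mapMulHom (MulHom.snd S T))) :
    l₁ = l₂ := by
  induction l₁ generalizing l₂ with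
  | nil => cases l₂ <;> simp_all
  | cons x xs ih =>
    cases l₂ with
    | nil => simp_all
    | cons y ys =>
      simp only [List.map_cons, List.cons.injEq] at h1 h2
      exact List.cons_eq_cons.mpr ⟨pair_inj h1.1 h2.1, ih h1.2 h2.2⟩

end Pair

/-- Cayley(S × T) embeds into Cayley(S) × Cayley(T): the map sending
∏φ_{(sᵢ,tᵢ)} to (∏φ_{sᵢ}, ∏φ_{tᵢ}) is a well-defined injective semigroup
homomorphism. -/
theorem cayley_prod_embeds {S T : Type*} [Semigroup S] [Semigroup T] :
    ∃ Φ : Cayley (S × T) →ₙ* Cayley S × Cayley T, Function.Injective Φ ∧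
      ∀ (s : S) (t : T),
        Φ ⟨phi (((s, t) : S × T) : WithOne (S × T)),
            Subsemigroup.subset_closure ⟨(s, t), rfl⟩⟩ =
          (⟨phi (s : WithOne S), Subsemigroup.subset_closure ⟨s, rfl⟩⟩,
            ⟨phi (t : WithOne T), Subsemigroup.subset_closure ⟨t, rfl⟩⟩) := by
  by_cases hST : Nonempty (S × T)
  · obtain ⟨⟨s₀, t₀⟩⟩ := hST
    -- sections
    let σS : WithOne S → WithOne (S × T) :=
      WithOne.recOneCoe 1 (fun s => (((s, t₀) : S × T) : WithOne (S × T)))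
    let σT : WithOne T → WithOne (S × T) :=
      WithOne.recOneCoe 1 (fun t => (((s₀, t) : S × T) : WithOne (S × T)))
    have hσS : ∀ x, WithOne.mapMulHom (MulHom.fst S T) (σS x) = x := by
      intro x
      induction x using WithOne.recOneCoe with
      | one => simp [σS]
      | coe a => simp [σS, WithOne.mapMulHom_coe]
    have hσT : ∀ x, WithOne.mapMulHom (MulHom.snd S T) (σT x) = x := by
      intro x
      induction x using WithOne.recOneCoe with
      | one => simp [σT]
      | coe a => simp [σT, WithOne.mapMulHom_coe]
    refine ⟨(cayleyMap (MulHom.fst S T) σS hσS).prod (cayleyMap (MulHom.snd S T) σT hσT),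
      ?_, ?_⟩
    · rintro ⟨f, hf⟩ ⟨g, hg⟩ h
      have h1 := congrArg Prod.fst h
      have h2 := congrArg Prod.snd h
      simp only [MulHom.prod_apply] at h1 h2
      ext1
      funext l
      refine pair_list_inj ?_ ?_
      · rw [cayleyMap_apply (MulHom.fst S T) σS hσS hf l,
          cayleyMap_apply (MulHom.fst S T) σS hσS hg l, h1]
      · rw [cayleyMap_apply (MulHom.snd S T) σT hσT hf l,
          cayleyMap_apply (MulHom.snd S T) σT hσT hg l, h2]
    · intro s t
      refine Prod.ext ?_ ?_ <;> ext1
      · exact shadow_gen (MulHom.fst S T) σS hσS (s, t)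
      · exact shadow_gen (MulHom.snd S T) σT hσT (s, t)
  · have hempty : ∀ f : Function.End (List (WithOne (S × T))), f ∈ Cayley (S × T) → False := by
      intro f hf
      refine Subsemigroup.closure_induction ?_ ?_ hf
      · rintro g ⟨⟨s, t⟩, -⟩
        exact hST ⟨(s, t)⟩
      · exact fun _ _ _ _ h _ => h
    exact ⟨⟨fun f => (hempty f.1 f.2).elim, fun f g => (hempty f.1 f.2).elim⟩,
      fun f => (hempty f.1 f.2).elim, fun s t => (hST ⟨(s, t)⟩).elim⟩
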